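/- Let v be a vertex of a tree T whose 2-transitive number t₂(v, T) equals t (i.e., t is the maximum index p over all 2-transitive partitions π = {V₁,...,V_k} of T such that v ∈ V_p). Then for every 1 ≤ i ≤ t, there exists a 2-transitive partition {V₁, ..., V_i} of T of size i with v ∈ V_i. -/
import Mathlib


open SimpleGraph

def TwoTransPart {V : Type*} (G : SimpleGraph V) (k : ℕ) (P : Fin k → Set V) : Prop :=
  (∀ i, (P i).Nonempty) ∧ (∀ v, ∃! i, v ∈ P i) ∧
    ∀ i j : Fin k, i < j → ∀ v ∈ P j,
      ∃ u w, u ∈ P i ∧ w ∈ P i ∧ u ≠ w ∧ G.Adj u v ∧ G.Adj w v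

/-- The 2-transitivity `Tr₂(G)`: the maximum size of a 2-transitive partition of `G`. -/
noncomputable def tr2 {V : Type*} (G : SimpleGraph V) : ℕ :=
  sSup {k | ∃ P : Fin k → Set V, TwoTransPart G k P}

/-- `v` appears in position `p` (i.e. in the `p`-th part) of some 2-transitive partition. -/
def HasPos2 {V : Type*} (G : SimpleGraph V) (v : V) (p : ℕ) : Prop :=
  ∃ (k : ℕ) (P : Fin k → Set V), TwoTransPart G k P ∧ ∃ i : Fin k, v ∈ P i ∧ (i : ℕ) + 1 = p

theorem stmt19 {V : Type*} [Fintype V] (G : SimpleGraph V) (hT : G.IsTree)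
    (v : V) (t : ℕ) (ht : IsGreatest {p | HasPos2 G v p} t) :
    ∀ i : ℕ, ∀ _hi : 1 ≤ i, ∀ _hit : i ≤ t,
      ∃ P : Fin i → Set V, TwoTransPart G i P ∧ v ∈ P ⟨i - 1, by omega⟩ := by
  intro i hi hit
  obtain ⟨k, P, hP, j, hvj, hjt⟩ := ht.1
  obtain ⟨hne, hpart, htrans⟩ := hP
  have hjk : (j : ℕ) < k := j.isLt
  have hij : i - 1 ≤ (j : ℕ) := by omega
  refine ⟨fun m => if h : (m : ℕ) < i - 1 then P ⟨m, by omega⟩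
      else ⋃ l : Fin k, ⋃ _ : i - 1 ≤ (l : ℕ), P l, ⟨?_, ?_, ?_⟩, ?_⟩
  · intro m
    by_cases h : (m : ℕ) < i - 1
    · simp only [h, dif_pos]
      exact hne _
    · simp only [h, dif_neg, not_false_iff]
      exact ⟨v, by simp only [Set.mem_iUnion]; exact ⟨j, hij, hvj⟩⟩
  · intro u
    obtain ⟨l, hul, hluniq⟩ := hpart u
    by_cases hl : (l : ℕ) < i - 1
    · refine ⟨⟨l, by omega⟩, ?_, ?_⟩
      · simp only [hl, dif_pos]
        convert hul using 2
      · intro m hm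
        by_cases hm' : (m : ℕ) < i - 1
        · simp only [hm', dif_pos] at hm
          have := hluniq _ hm
          exact Fin.ext (by simpa using congrArg Fin.val this)
        · simp only [hm', dif_neg, not_false_iff, Set.mem_iUnion] at hm
          obtain ⟨l', hl', hul'⟩ := hm
          have := hluniq _ hul'
          subst this
          omega
    · refine ⟨⟨i - 1, by omega⟩, ?_, ?_⟩
      · simp only [dif_neg (lt_irrefl (i - 1)), Set.mem_iUnion]
        exact ⟨l, by omega, hul⟩
      · intro m hm
        by_cases hm' : (m : ℕ) < i - 1
        · simp only [hm', dif_pos] at hm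
          have := hluniq _ hm
          have : (m : ℕ) = (l : ℕ) := by simpa using congrArg Fin.val this
          omega
        · exact Fin.ext (by have := m.isLt; simp; omega)
  · intro a b hab u hub
    have hab' : (a : ℕ) < (b : ℕ) := hab
    have ha : (a : ℕ) < i - 1 := by have := b.isLt; omega
    simp only [ha, dif_pos]
    by_cases hb : (b : ℕ) < i - 1
    · simp only [hb, dif_pos] at hub
      exact htrans ⟨a, by omega⟩ ⟨b, by omega⟩ (by exact hab') u hub
    · simp only [hb, dif_neg, not_false_iff, Set.mem_iUnion] at hub
      obtain ⟨l, hl, hul⟩ := hub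
      exact htrans ⟨a, by omega⟩ l (by simp [Fin.lt_def]; omega) u hul
  · simp only [dif_neg (lt_irrefl (i - 1)), Set.mem_iUnion]
    exact ⟨j, hij, hvj⟩
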